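/- arXiv:1210.0725 — 2 statements merged into one kernel-verified Lean document; each statement's English description precedes it below -/
import Mathlib

section
/- Let (Ω, F, P) be a probability space, let β > 0, let k ≥ 2 be an integer, let α satisfy 1 − 1/(2k) < α < 1, and let λ > 0. Let W be a Gaussian random variable on Ω with mean 0 and variance 1/β, and let (X_n) be real-valued random variables on Ω such that X_n and W are independent for each n. Set J(x) = λx^{2k}/(2k)! and s_n = n^{1−2k(1−α)}. If the laws of X_n + W/n^{α−1/2} satisfy the LDP with speed (s_n) and rate function J, then the laws of X_n satisfy the LDP with speed (s_n) and rate function J. -/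
open MeasureTheory ProbabilityTheory Filter Set

/-- A sequence of Borel probability measures on `ℝ` satisfies the LDP with speed `a`
and rate function `I`. Logarithms of measures are taken via `ENNReal.log` (valued in
`EReal`, so that `log 0 = ⊥`), and infima of the rate function are taken in `EReal`. -/
def SatisfiesLDP (μ : ℕ → Measure ℝ) (a : ℕ → ℝ) (I : ℝ → ℝ) : Prop :=
  (∀ C : Set ℝ, IsClosed C →
    limsup (fun n => (((a n)⁻¹ : ℝ) : EReal) * ENNReal.log (μ n C)) atTop
      ≤ -(⨅ x ∈ C, (I x : EReal))) ∧
  (∀ O : Set ℝ, IsOpen O →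
    -(⨅ x ∈ O, (I x : EReal))
      ≤ liminf (fun n => (((a n)⁻¹ : ℝ) : EReal) * ENNReal.log (μ n O)) atTop)

namespace Stmt13Aux

open Real


lemma le_coe_of_forall {a : EReal} {r : ℝ} (h : ∀ c : ℝ, r < c → a ≤ (c : EReal)) :
    a ≤ (r : EReal) := by
  by_contra hlt
  push_neg at hlt
  obtain ⟨y, h1, h2⟩ := EReal.exists_between_coe_real hlt
  exact absurd (h y (by exact_mod_cast h1)) (not_le.2 h2)

lemma coe_le_of_forall {a : EReal} {r : ℝ} (h : ∀ c : ℝ, c < r → (c : EReal) ≤ a) :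
    (r : EReal) ≤ a := by
  by_contra hlt
  push_neg at hlt
  obtain ⟨y, h1, h2⟩ := EReal.exists_between_coe_real hlt
  exact absurd (h y (by exact_mod_cast h2)) (not_le.2 h1)

lemma le_neg_of_forall {a I : EReal} (hIbot : I ≠ ⊥)
    (h : ∀ c : ℝ, (c : EReal) < I → a ≤ ((-c : ℝ) : EReal)) : a ≤ -I := by
  induction I using EReal.rec with
  | bot => exact absurd rfl hIbot
  | coe r =>
    rw [← EReal.coe_neg]
    refine le_coe_of_forall fun c hc => ?_
    have h1 : (( -c : ℝ) : EReal) < (r : EReal) := by exact_mod_cast (by linarith : -c < r)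
    simpa using h (-c) h1
  | top =>
    rw [show -(⊤:EReal) = ⊥ from rfl]
    by_contra hbot
    push_neg at hbot
    obtain ⟨y, _, hy2⟩ := EReal.exists_between_coe_real hbot
    have h1 : a ≤ ((y - 1 : ℝ) : EReal) := by simpa using h (-(y - 1)) (EReal.coe_lt_top _)
    have h2 : ((y - 1 : ℝ) : EReal) < (y : EReal) := by exact_mod_cast sub_one_lt y
    exact absurd ((h1.trans_lt h2).trans hy2) (lt_irrefl a)

lemma sublevel_compact {lam c' : ℝ} (hlam : 0 < lam) (hc' : 0 < c') {m : ℕ} (hm : m ≠ 0)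
    (hmeven : Even m) (c : ℝ) : IsCompact {x : ℝ | lam * x ^ m / c' ≤ c} := by
  set b : ℝ := max 1 (c * c' / lam) with hb
  refine IsCompact.of_isClosed_subset (isCompact_Icc (a := -b) (b := b))
    (isClosed_le (by fun_prop) continuous_const) ?_
  intro x hx
  simp only [mem_setOf_eq] at hx
  have hxm : x ^ m ≤ c * c' / lam := by
    rw [div_le_iff₀ hc'] at hx
    rw [le_div_iff₀ hlam]
    nlinarith
  have habs : |x| ≤ b := by
    by_cases h1 : |x| ≤ 1
    · exact h1.trans (le_max_left _ _)
    · push_neg at h1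
      have h2 : |x| ≤ |x| ^ m := le_self_pow₀ h1.le hm
      have h3 : |x| ^ m = x ^ m := hmeven.pow_abs x
      exact le_trans (h2.trans_eq h3) (hxm.trans (le_max_right _ _))
  exact abs_le.1 habs

lemma exists_cthickening_bound {J : ℝ → ℝ} (hJc : Continuous J)
    (hcomp : ∀ c : ℝ, IsCompact {x | J x ≤ c}) {C : Set ℝ} (hC : IsClosed C) {c : ℝ}
    (hc : (c : EReal) < ⨅ x ∈ C, (J x : EReal)) :
    ∃ δ : ℝ, 0 < δ ∧ ∀ y ∈ Metric.cthickening δ C, c ≤ J y := by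
  by_contra hcon
  push_neg at hcon
  set S : ℕ → Set ℝ := fun m => Metric.cthickening (1/(m+1)) C ∩ {x | J x ≤ c} with hS
  have hScl : ∀ m, IsClosed (S m) := fun m =>
    Metric.isClosed_cthickening.inter (isClosed_le hJc continuous_const)
  have hScomp : ∀ m, IsCompact (S m) := fun m =>
    (hcomp c).of_isClosed_subset (hScl m) inter_subset_right
  have hSne : ∀ m, (S m).Nonempty := by
    intro m
    obtain ⟨y, hy1, hy2⟩ := hcon (1/(m+1)) (by positivity)
    exact ⟨y, hy1, hy2.le⟩
  have hSdec : ∀ m, S (m+1) ⊆ S m := by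
    intro m
    refine inter_subset_inter_left _ (Metric.cthickening_mono ?_ _)
    have h1 : (0:ℝ) < (m:ℝ) + 1 := by positivity
    rw [div_le_div_iff₀ (by positivity) h1]
    push_cast
    linarith
  obtain ⟨x, hx⟩ := IsCompact.nonempty_iInter_of_sequence_nonempty_isCompact_isClosed
    S hSdec hSne (hScomp 0) hScl
  simp only [mem_iInter] at hx
  have hxC : x ∈ C := by
    rw [← hC.closure_eq, EMetric.mem_closure_iff_infEdist_zero]
    refine le_antisymm ?_ (zero_le)
    refine ENNReal.le_of_forall_pos_le_add fun ε hε _ => ?_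
    rw [zero_add]
    obtain ⟨m, hm⟩ := exists_nat_one_div_lt (show (0:ℝ) < (ε:ℝ) by exact_mod_cast hε)
    refine (Metric.mem_cthickening_iff.1 (hx m).1).trans ?_
    refine le_trans (ENNReal.ofReal_le_ofReal hm.le) ?_
    rw [ENNReal.ofReal_coe_nnreal]
  have hinf : (⨅ y ∈ C, (J y : EReal)) ≤ (J x : EReal) := iInf₂_le x hxC
  have hlt : (c : EReal) < (J x : EReal) := hc.trans_le hinf
  have : c < J x := by exact_mod_cast hlt
  exact absurd (hx 0).2 (not_le.2 this)



lemma gauss_tail {v : NNReal} (hv : 0 < (v:ℝ)) {t : ℝ} (ht : 0 ≤ t) :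
    gaussianReal 0 v {x : ℝ | t ≤ |x|} ≤
      ENNReal.ofReal (2 * Real.exp (-(4 * (v:ℝ))⁻¹ * t ^ 2)) := by
  have hvne : v ≠ 0 := by
    intro h; rw [h] at hv; simp at hv
  set b : ℝ := (4 * (v:ℝ))⁻¹ with hb
  have hbpos : 0 < b := by positivity
  have hSmeas : MeasurableSet {x : ℝ | t ≤ |x|} :=
    (isClosed_le continuous_const continuous_abs).measurableSet
  rw [gaussianReal_apply 0 hvne]
  have hsq : (0:ℝ) < √(2 * π * v) := Real.sqrt_pos.2 (by positivity)
  set K : ℝ := (√(2 * π * v))⁻¹ * Real.exp (-b * t^2) with hK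
  have hKnn : 0 ≤ K := mul_nonneg (inv_nonneg.2 hsq.le) (Real.exp_pos _).le
  have hbound : ∀ x ∈ {x : ℝ | t ≤ |x|},
      gaussianPDF 0 v x ≤ ENNReal.ofReal (K * Real.exp (-b * x^2)) := by
    intro x hx
    simp only [mem_setOf_eq] at hx
    have ht2 : t^2 ≤ x^2 := by nlinarith [sq_abs x, abs_nonneg x]
    apply ENNReal.ofReal_le_ofReal
    rw [gaussianPDFReal, hK]
    rw [show (√(2 * π * (v:ℝ)))⁻¹ * Real.exp (-b * t^2) * Real.exp (-b * x^2)
        = (√(2 * π * (v:ℝ)))⁻¹ * (Real.exp (-b * t^2) * Real.exp (-b * x^2)) from mul_assoc _ _ _]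
    refine mul_le_mul_of_nonneg_left ?_ (inv_nonneg.2 hsq.le)
    rw [← Real.exp_add]
    apply Real.exp_le_exp.2
    have hkey : -(x - 0)^2 / (2 * (v:ℝ)) = -b * x^2 + -b * x^2 := by
      rw [hb]; field_simp; ring
    rw [hkey]
    have : b * t^2 ≤ b * x^2 := mul_le_mul_of_nonneg_left ht2 hbpos.le
    linarith
  calc ∫⁻ x in {x : ℝ | t ≤ |x|}, gaussianPDF 0 v x
      ≤ ∫⁻ x in {x : ℝ | t ≤ |x|}, ENNReal.ofReal (K * Real.exp (-b * x^2)) :=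
        setLIntegral_mono' hSmeas hbound
    _ ≤ ∫⁻ x, ENNReal.ofReal (K * Real.exp (-b * x^2)) := setLIntegral_le_lintegral _ _
    _ = ENNReal.ofReal (∫ x, K * Real.exp (-b * x^2)) := by
        rw [← ofReal_integral_eq_lintegral_ofReal
          ((integrable_exp_neg_mul_sq hbpos).const_mul K)
          (ae_of_all _ fun x => mul_nonneg hKnn (Real.exp_pos _).le)]
    _ ≤ ENNReal.ofReal (2 * Real.exp (-b * t ^ 2)) := by
        apply ENNReal.ofReal_le_ofReal
        rw [MeasureTheory.integral_const_mul, integral_gaussian]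
        have h1 : √(π / b) ≤ 2 * √(2 * π * v) := by
          rw [hb, show π / (4 * (v:ℝ))⁻¹ = π * (4 * (v:ℝ)) by field_simp]
          have h2 : π * (4 * (v:ℝ)) ≤ 4 * (2 * π * v) := by nlinarith [pi_pos, hv]
          calc √(π * (4 * (v:ℝ))) ≤ √(4 * (2 * π * v)) := Real.sqrt_le_sqrt h2
            _ = 2 * √(2 * π * v) := by
                rw [show (4:ℝ) * (2*π*v) = 2^2 * (2*π*v) by ring,
                  Real.sqrt_mul (by positivity), Real.sqrt_sq (by norm_num)]
        calc K * √(π / b) ≤ K * (2 * √(2 * π * v)) :=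
              mul_le_mul_of_nonneg_left h1 hKnn
          _ = 2 * Real.exp (-b * t^2) := by
              rw [hK]; field_simp


end Stmt13Aux

set_option maxHeartbeats 2000000 in
open Stmt13Aux in
/-- Let `β > 0`, `k ≥ 2` an integer, `1 − 1/(2k) < α < 1`, `λ > 0`. Let
`W` be Gaussian with mean `0` and variance `1/β`, independent of each `X_n`. Set
`J x = λ x^(2k)/(2k)!` and `s_n = n^(1−2k(1−α))`. If the laws of `X_n + W/n^(α−1/2)`
satisfy the LDP with speed `s_n` and rate `J`, then so do the laws of `X_n`. -/
theorem stmt13 {Ω : Type*} [MeasurableSpace Ω] (P : Measure Ω) [IsProbabilityMeasure P]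
    (β : ℝ) (hβ : 0 < β)
    (k : ℕ) (hk : 2 ≤ k) (α : ℝ) (hα₁ : 1 - 1 / (2 * (k : ℝ)) < α) (hα₂ : α < 1)
    (lam : ℝ) (hlam : 0 < lam)
    (W : Ω → ℝ) (hW : Measurable W)
    (hWlaw : P.map W = ProbabilityTheory.gaussianReal 0 (Real.toNNReal β⁻¹))
    (X : ℕ → Ω → ℝ) (hX : ∀ n, Measurable (X n))
    (hindep : ∀ n, IndepFun (X n) W P)
    (J : ℝ → ℝ) (hJ : J = fun x => lam * x ^ (2 * k) / (Nat.factorial (2 * k) : ℝ))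
    (s : ℕ → ℝ) (hs : s = fun n : ℕ => (n : ℝ) ^ (1 - 2 * (k : ℝ) * (1 - α)))
    (hLDP : SatisfiesLDP
      (fun n => P.map (fun ω => X n ω + W ω / (n : ℝ) ^ (α - 1 / 2))) s J) :
    SatisfiesLDP (fun n => P.map (X n)) s J := by
  have hk2 : (2:ℝ) ≤ (k:ℝ) := by exact_mod_cast hk
  have hepos : 0 < 1 - 2 * (k:ℝ) * (1 - α) := by
    have hkpos : (0:ℝ) < 2 * k := by linarith
    have h1 : 1 - α < 1 / (2*(k:ℝ)) := by linarith
    have h2 : 2*(k:ℝ)*(1-α) < 1 := by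
      calc 2*(k:ℝ)*(1-α) < 2*(k:ℝ)*(1/(2*(k:ℝ))) := by
            exact mul_lt_mul_of_pos_left h1 hkpos
        _ = 1 := by field_simp
    linarith
  have hg : 0 < 2*α - 1 - (1 - 2 * (k:ℝ) * (1 - α)) := by nlinarith
  have h2α : 0 < 2*α - 1 := by linarith
  have hspos : ∀ n : ℕ, 1 ≤ n → 0 < s n := by
    intro n hn
    rw [hs]
    exact Real.rpow_pos_of_pos (by exact_mod_cast Nat.lt_of_lt_of_le Nat.zero_lt_one hn) _
  have hstop : Tendsto s atTop atTop := by
    rw [hs]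
    exact (tendsto_rpow_atTop hepos).comp tendsto_natCast_atTop_atTop
  have hJcont : Continuous J := by rw [hJ]; fun_prop
  have hJnonneg : ∀ x, 0 ≤ J x := by
    intro x
    rw [hJ]
    exact div_nonneg (mul_nonneg hlam.le ((even_two_mul k).pow_nonneg x)) (Nat.cast_nonneg _)
  have hJcomp : ∀ c : ℝ, IsCompact {x | J x ≤ c} := by
    intro c
    rw [hJ]
    exact sublevel_compact hlam (by exact_mod_cast (Nat.factorial_pos (2*k)))
      (by omega) (even_two_mul k) c
  have hYmeas : ∀ n : ℕ, Measurable (fun ω => X n ω + W ω / (n : ℝ) ^ (α - 1/2)) :=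
    fun n => (hX n).add (hW.div_const _)
  have hv : (0:ℝ) < (Real.toNNReal β⁻¹ : ℝ) := by
    rw [Real.coe_toNNReal _ (inv_nonneg.2 hβ.le)]
    positivity
  -- superexponential tail estimate
  have hsup : ∀ δ : ℝ, 0 < δ → ∀ M : ℝ, ∀ᶠ n : ℕ in atTop,
      P {ω | δ < |W ω / (n:ℝ) ^ (α - 1/2)|} ≤ ENNReal.ofReal (Real.exp (-M * s n)) := by
    intro δ hδ M
    set v := Real.toNNReal β⁻¹ with hvdef
    set b : ℝ := (4*(v:ℝ))⁻¹ with hbdef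
    have hbpos : 0 < b := by positivity
    have htend : Tendsto
        (fun n : ℕ => b * δ^2 * (n:ℝ) ^ (2*α - 1 - (1 - 2*(k:ℝ)*(1-α)))) atTop atTop :=
      (((tendsto_rpow_atTop hg).comp tendsto_natCast_atTop_atTop).const_mul_atTop
        (by positivity))
    filter_upwards [eventually_ge_atTop 1, htend.eventually_ge_atTop (max M 0 + Real.log 2)]
      with n hn1 hn2
    have hn1R : (1:ℝ) ≤ (n:ℝ) := by exact_mod_cast hn1
    have hnpos : (0:ℝ) < (n:ℝ) := by linarith
    have hc : (0:ℝ) < (n:ℝ) ^ (α - 1/2) := Real.rpow_pos_of_pos hnpos _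
    set t : ℝ := δ * (n:ℝ) ^ (α - 1/2) with htdef
    have htnn : 0 ≤ t := by positivity
    have hsub : {ω | δ < |W ω / (n:ℝ) ^ (α - 1/2)|} ⊆ W ⁻¹' {x | t ≤ |x|} := by
      intro ω hω
      simp only [mem_setOf_eq, mem_preimage] at *
      rw [abs_div, abs_of_pos hc, lt_div_iff₀ hc] at hω
      exact hω.le
    have hmeasS : MeasurableSet {x : ℝ | t ≤ |x|} :=
      (isClosed_le continuous_const continuous_abs).measurableSet
    calc P {ω | δ < |W ω / (n:ℝ) ^ (α - 1/2)|} ≤ P (W ⁻¹' {x | t ≤ |x|}) :=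
          measure_mono hsub
      _ = (P.map W) {x | t ≤ |x|} := (Measure.map_apply hW hmeasS).symm
      _ = gaussianReal 0 v {x | t ≤ |x|} := by rw [hWlaw]
      _ ≤ ENNReal.ofReal (2 * Real.exp (-b * t^2)) := gauss_tail hv htnn
      _ ≤ ENNReal.ofReal (Real.exp (-M * s n)) := by
          apply ENNReal.ofReal_le_ofReal
          rw [show (2:ℝ) = Real.exp (Real.log 2) from (Real.exp_log (by norm_num)).symm,
            ← Real.exp_add]
          apply Real.exp_le_exp.2
          have ht2 : t^2 = δ^2 * (n:ℝ) ^ (2*α - 1) := by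
            rw [htdef, mul_pow]
            congr 1
            rw [← Real.rpow_natCast ((n:ℝ) ^ (α - 1/2)) 2, ← Real.rpow_mul hnpos.le]
            congr 1
            push_cast
            ring
          have hse : s n = (n:ℝ) ^ (1 - 2*(k:ℝ)*(1-α)) := by rw [hs]
          have hsplit : (n:ℝ) ^ (2*α-1)
              = (n:ℝ) ^ (2*α - 1 - (1 - 2*(k:ℝ)*(1-α))) * (n:ℝ) ^ (1 - 2*(k:ℝ)*(1-α)) := by
            rw [← Real.rpow_add hnpos]
            ring_nf
          have hone : 1 ≤ (n:ℝ) ^ (1 - 2*(k:ℝ)*(1-α)) := Real.one_le_rpow hn1R hepos.le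
          have hBnn : (0:ℝ) ≤ (n:ℝ) ^ (1 - 2*(k:ℝ)*(1-α)) := by positivity
          have hl2 : (0:ℝ) < Real.log 2 := Real.log_pos (by norm_num)
          have step1 : M * s n + Real.log 2
              ≤ (max M 0 + Real.log 2) * (n:ℝ) ^ (1 - 2*(k:ℝ)*(1-α)) := by
            rw [hse]
            nlinarith [mul_le_mul_of_nonneg_right (le_max_left M 0) hBnn, hone]
          have step2 : (max M 0 + Real.log 2) * (n:ℝ) ^ (1 - 2*(k:ℝ)*(1-α))
              ≤ (b * δ^2 * (n:ℝ) ^ (2*α - 1 - (1 - 2*(k:ℝ)*(1-α))))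
                * (n:ℝ) ^ (1 - 2*(k:ℝ)*(1-α)) :=
            mul_le_mul_of_nonneg_right hn2 hBnn
          rw [ht2, hsplit]
          nlinarith [step1, step2]
  constructor
  · intro C hC
    have hIbot : (⨅ x ∈ C, ((J x : ℝ) : EReal)) ≠ ⊥ := by
      have h0 : (0:EReal) ≤ ⨅ x ∈ C, ((J x : ℝ) : EReal) :=
        le_iInf₂ fun x _ => EReal.coe_nonneg.2 (hJnonneg x)
      exact ne_of_gt (lt_of_lt_of_le (by simp) h0)
    refine le_neg_of_forall hIbot ?_
    intro c hc
    obtain ⟨c₁, hcc₁, hc₁I⟩ := EReal.exists_between_coe_real hc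
    have hcc₁' : c < c₁ := by exact_mod_cast hcc₁
    obtain ⟨δ, hδ, hδbound⟩ := exists_cthickening_bound hJcont hJcomp hC hc₁I
    have hIδ : (c₁ : EReal) ≤ ⨅ y ∈ Metric.cthickening δ C, ((J y : ℝ) : EReal) :=
      le_iInf₂ fun y hy => by exact_mod_cast hδbound y hy
    have hlim := hLDP.1 (Metric.cthickening δ C) Metric.isClosed_cthickening
    set c₂ : ℝ := (c + c₁)/2 with hc₂def
    have hcc₂ : c < c₂ := by rw [hc₂def]; linarith
    have hc₂c₁ : c₂ < c₁ := by rw [hc₂def]; linarith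
    have hnegc : -(⨅ y ∈ Metric.cthickening δ C, ((J y : ℝ) : EReal)) ≤ ((-c₁ : ℝ) : EReal) := by
      rw [EReal.coe_neg]
      exact EReal.neg_le_neg_iff.2 hIδ
    have h2 := (hlim.trans hnegc).trans_lt
      (show ((-c₁ : ℝ) : EReal) < ((-c₂ : ℝ) : EReal) by exact_mod_cast (by linarith : -c₁ < -c₂))
    have hev1 := eventually_lt_of_limsup_lt h2
    have hev2 := hsup δ hδ c₂
    have hev3 : ∀ᶠ n : ℕ in atTop, Real.log 2 ≤ (c₂ - c) * s n :=
      (hstop.const_mul_atTop (by linarith : (0:ℝ) < c₂ - c)).eventually_ge_atTop _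
    refine limsup_le_of_le (by isBoundedDefault) ?_
    filter_upwards [hev1, hev2, hev3, eventually_ge_atTop 1] with n hB hp hlog2 hn1
    have hsn : 0 < s n := hspos n hn1
    have hsinv : (0:EReal) ≤ (((s n)⁻¹ : ℝ) : EReal) := EReal.coe_nonneg.2 (by positivity)
    have hinvmul : ∀ y : ℝ, (s n)⁻¹ * (y * s n) = y := fun y => by
      rw [mul_comm y (s n), ← mul_assoc, inv_mul_cancel₀ hsn.ne', one_mul]
    have hν : (P.map (fun ω => X n ω + W ω / (n:ℝ) ^ (α - 1/2))) (Metric.cthickening δ C)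
        ≤ ENNReal.ofReal (Real.exp (-c₂ * s n)) := by
      by_contra hcon
      push_neg at hcon
      refine absurd hB (not_lt.2 ?_)
      have hlogc : ((-c₂ * s n : ℝ) : EReal) ≤ ENNReal.log
          ((P.map (fun ω => X n ω + W ω / (n:ℝ) ^ (α - 1/2))) (Metric.cthickening δ C)) := by
        rw [show ((-c₂ * s n : ℝ) : EReal) = ENNReal.log (ENNReal.ofReal (Real.exp (-c₂ * s n))) by
          rw [ENNReal.log_ofReal_of_pos (Real.exp_pos _), Real.log_exp]]
        exact ENNReal.log_le_log_iff.2 hcon.le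
      calc ((-c₂ : ℝ) : EReal) = (((s n)⁻¹ * (-c₂ * s n) : ℝ) : EReal) := by
            rw [hinvmul]
        _ = (((s n)⁻¹ : ℝ) : EReal) * ((-c₂ * s n : ℝ) : EReal) := EReal.coe_mul _ _
        _ ≤ _ := mul_le_mul_of_nonneg_left hlogc hsinv
    have hmeasure : (P.map (X n)) C
        ≤ (P.map (fun ω => X n ω + W ω / (n:ℝ) ^ (α - 1/2))) (Metric.cthickening δ C)
          + P {ω | δ < |W ω / (n:ℝ) ^ (α - 1/2)|} := by
      rw [Measure.map_apply (hX n) hC.measurableSet,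
        Measure.map_apply (hYmeas n) Metric.isClosed_cthickening.measurableSet]
      refine le_trans (measure_mono ?_) (measure_union_le _ _)
      intro ω hω
      simp only [mem_preimage] at hω
      simp only [mem_union, mem_preimage, mem_setOf_eq]
      by_cases hd : |W ω / (n:ℝ) ^ (α - 1/2)| ≤ δ
      · left
        refine Metric.mem_cthickening_of_dist_le _ (X n ω) _ _ hω ?_
        rw [Real.dist_eq, show X n ω + W ω / (n:ℝ) ^ (α - 1/2) - X n ω
          = W ω / (n:ℝ) ^ (α - 1/2) from by ring]
        exact hd
      · right
        exact not_le.1 hd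
    have hμ : (P.map (X n)) C ≤ ENNReal.ofReal (Real.exp (-c * s n)) := by
      refine hmeasure.trans (le_trans (add_le_add hν hp) ?_)
      rw [← ENNReal.ofReal_add (Real.exp_pos _).le (Real.exp_pos _).le]
      apply ENNReal.ofReal_le_ofReal
      rw [show Real.exp (-c₂ * s n) + Real.exp (-c₂ * s n) = 2 * Real.exp (-c₂ * s n) from by ring,
        show (2:ℝ) = Real.exp (Real.log 2) from (Real.exp_log (by norm_num)).symm, ← Real.exp_add]
      exact Real.exp_le_exp.2 (by linarith)
    have hlogmu : ENNReal.log ((P.map (X n)) C) ≤ ((-c * s n : ℝ) : EReal) := by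
      rw [show ((-c * s n : ℝ) : EReal) = ENNReal.log (ENNReal.ofReal (Real.exp (-c * s n))) by
        rw [ENNReal.log_ofReal_of_pos (Real.exp_pos _), Real.log_exp]]
      exact ENNReal.log_le_log_iff.2 hμ
    calc (((s n)⁻¹ : ℝ) : EReal) * ENNReal.log ((P.map (X n)) C)
        ≤ (((s n)⁻¹ : ℝ) : EReal) * ((-c * s n : ℝ) : EReal) :=
          mul_le_mul_of_nonneg_left hlogmu hsinv
      _ = (((s n)⁻¹ * (-c * s n) : ℝ) : EReal) := (EReal.coe_mul _ _).symm
      _ = ((-c : ℝ) : EReal) := by rw [hinvmul]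
  · intro O hO
    refine EReal.neg_le.2 (le_iInf₂ fun x hx => EReal.neg_le.2 ?_)
    rw [show -((J x : ℝ) : EReal) = ((-(J x) : ℝ) : EReal) from (EReal.coe_neg _).symm]
    refine coe_le_of_forall fun d hd => ?_
    have hJxc : J x < -d := by linarith
    obtain ⟨ε, hε, hball⟩ := Metric.isOpen_iff.1 hO x hx
    have hδ : 0 < ε/2 := by linarith
    set c₁ : ℝ := (J x + -d)/2 with hc₁def
    have hJc₁ : J x < c₁ := by rw [hc₁def]; linarith
    have hc₁c : c₁ < -d := by rw [hc₁def]; linarith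
    have hliminf := hLDP.2 (Metric.ball x (ε/2)) Metric.isOpen_ball
    have hinf : (⨅ y ∈ Metric.ball x (ε/2), ((J y : ℝ) : EReal)) ≤ ((J x : ℝ) : EReal) :=
      iInf₂_le x (Metric.mem_ball_self hδ)
    have hchain : ((-c₁ : ℝ) : EReal) < liminf (fun n =>
        (((s n)⁻¹ : ℝ) : EReal) * ENNReal.log
          ((P.map (fun ω => X n ω + W ω / (n:ℝ) ^ (α - 1/2))) (Metric.ball x (ε/2)))) atTop := by
      refine lt_of_lt_of_le (lt_of_lt_of_le ?_ (EReal.neg_le_neg_iff.2 hinf)) hliminf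
      rw [show -((J x : ℝ) : EReal) = ((-(J x) : ℝ) : EReal) from (EReal.coe_neg _).symm]
      exact_mod_cast (by linarith : -c₁ < -(J x))
    have hev1 := eventually_lt_of_lt_liminf hchain
    have hev2 := hsup (ε/2) hδ (c₁+1)
    have hev3 : ∀ᶠ n : ℕ in atTop, Real.log 2 ≤ s n := hstop.eventually_ge_atTop _
    have hev4 : ∀ᶠ n : ℕ in atTop, Real.log 2 ≤ (-d - c₁) * s n :=
      (hstop.const_mul_atTop (by linarith : (0:ℝ) < -d - c₁)).eventually_ge_atTop _
    refine le_liminf_of_le (by isBoundedDefault) ?_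
    filter_upwards [hev1, hev2, hev3, hev4, eventually_ge_atTop 1] with n hB hp hlog2 hlog2' hn1
    have hsn : 0 < s n := hspos n hn1
    have hsinv : (0:EReal) ≤ (((s n)⁻¹ : ℝ) : EReal) := EReal.coe_nonneg.2 (by positivity)
    have hinvmul : ∀ y : ℝ, (s n)⁻¹ * (y * s n) = y := fun y => by
      rw [mul_comm y (s n), ← mul_assoc, inv_mul_cancel₀ hsn.ne', one_mul]
    have hν : ENNReal.ofReal (Real.exp (-c₁ * s n))
        ≤ (P.map (fun ω => X n ω + W ω / (n:ℝ) ^ (α - 1/2))) (Metric.ball x (ε/2)) := by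
      by_contra hcon
      push_neg at hcon
      refine absurd hB (not_lt.2 ?_)
      have hlogc : ENNReal.log
          ((P.map (fun ω => X n ω + W ω / (n:ℝ) ^ (α - 1/2))) (Metric.ball x (ε/2)))
          ≤ ((-c₁ * s n : ℝ) : EReal) := by
        rw [show ((-c₁ * s n : ℝ) : EReal) = ENNReal.log (ENNReal.ofReal (Real.exp (-c₁ * s n))) by
          rw [ENNReal.log_ofReal_of_pos (Real.exp_pos _), Real.log_exp]]
        exact ENNReal.log_le_log_iff.2 hcon.le
      calc (((s n)⁻¹ : ℝ) : EReal) * ENNReal.log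
            ((P.map (fun ω => X n ω + W ω / (n:ℝ) ^ (α - 1/2))) (Metric.ball x (ε/2)))
          ≤ (((s n)⁻¹ : ℝ) : EReal) * ((-c₁ * s n : ℝ) : EReal) :=
            mul_le_mul_of_nonneg_left hlogc hsinv
        _ = (((s n)⁻¹ * (-c₁ * s n) : ℝ) : EReal) := (EReal.coe_mul _ _).symm
        _ = ((-c₁ : ℝ) : EReal) := by rw [hinvmul]
    have hmeasure : (P.map (fun ω => X n ω + W ω / (n:ℝ) ^ (α - 1/2))) (Metric.ball x (ε/2))
        ≤ (P.map (X n)) O + P {ω | ε/2 < |W ω / (n:ℝ) ^ (α - 1/2)|} := by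
      rw [Measure.map_apply (hYmeas n) Metric.isOpen_ball.measurableSet,
        Measure.map_apply (hX n) hO.measurableSet]
      refine le_trans (measure_mono ?_) (measure_union_le _ _)
      intro ω hω
      simp only [mem_preimage, Metric.mem_ball, Real.dist_eq] at hω
      simp only [mem_union, mem_preimage, mem_setOf_eq]
      by_cases hdd : |W ω / (n:ℝ) ^ (α - 1/2)| ≤ ε/2
      · left
        apply hball
        rw [Metric.mem_ball, Real.dist_eq]
        have habs : |X n ω - x| ≤ |X n ω + W ω / (n:ℝ) ^ (α - 1/2) - x|
            + |W ω / (n:ℝ) ^ (α - 1/2)| := by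
          rw [show X n ω - x = (X n ω + W ω / (n:ℝ) ^ (α - 1/2) - x)
            - W ω / (n:ℝ) ^ (α - 1/2) from by ring, sub_eq_add_neg]
          exact (abs_add_le _ _).trans (by rw [abs_neg])
        linarith
      · right
        exact not_le.1 hdd
    have hple : P {ω | ε/2 < |W ω / (n:ℝ) ^ (α - 1/2)|}
        ≤ ENNReal.ofReal ((1/2) * Real.exp (-c₁ * s n)) := by
      refine hp.trans (ENNReal.ofReal_le_ofReal ?_)
      rw [show (1/2:ℝ) * Real.exp (-c₁ * s n) = Real.exp (-Real.log 2 + -c₁ * s n) from by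
        rw [Real.exp_add, Real.exp_neg, Real.exp_log (by norm_num : (0:ℝ) < 2)]; ring]
      exact Real.exp_le_exp.2 (by linarith)
    have hμ : ENNReal.ofReal (Real.exp (d * s n)) ≤ (P.map (X n)) O := by
      have ha : ENNReal.ofReal (Real.exp (-c₁ * s n))
          ≤ (P.map (X n)) O + ENNReal.ofReal ((1/2) * Real.exp (-c₁ * s n)) :=
        hν.trans (hmeasure.trans (add_le_add_right hple _))
      have hsub : ENNReal.ofReal (Real.exp (-c₁ * s n))
          - ENNReal.ofReal ((1/2) * Real.exp (-c₁ * s n)) ≤ (P.map (X n)) O :=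
        tsub_le_iff_right.2 ha
      refine le_trans ?_ hsub
      rw [← ENNReal.ofReal_sub _ (by positivity)]
      apply ENNReal.ofReal_le_ofReal
      rw [show Real.exp (-c₁ * s n) - 1/2 * Real.exp (-c₁ * s n)
          = Real.exp (-Real.log 2 + -c₁ * s n) from by
        rw [Real.exp_add, Real.exp_neg, Real.exp_log (by norm_num : (0:ℝ) < 2)]; ring]
      refine Real.exp_le_exp.2 ?_
      linarith
    have hlogmu : ((d * s n : ℝ) : EReal) ≤ ENNReal.log ((P.map (X n)) O) := by
      rw [show ((d * s n : ℝ) : EReal) = ENNReal.log (ENNReal.ofReal (Real.exp (d * s n))) by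
        rw [ENNReal.log_ofReal_of_pos (Real.exp_pos _), Real.log_exp]]
      exact ENNReal.log_le_log_iff.2 hμ
    calc ((d : ℝ) : EReal) = (((s n)⁻¹ * (d * s n) : ℝ) : EReal) := by rw [hinvmul]
      _ = (((s n)⁻¹ : ℝ) : EReal) * ((d * s n : ℝ) : EReal) := EReal.coe_mul _ _
      _ ≤ (((s n)⁻¹ : ℝ) : EReal) * ENNReal.log ((P.map (X n)) O) :=
          mul_le_mul_of_nonneg_left hlogmu hsinv
end

section
/- Let β > 0 and let ν be a Borel probability measure on ℝ with finite first moment (∫|h| dν(h) < ∞). Define L(z) = ∫ log cosh(β(z+h)) dν(h) and G(x) = βx²/2 − L(x). Then for every x ∈ ℝ, inf_{z∈ℝ} [ β(x−z)²/2 + sup_{w∈ℝ} ( G(w) − β(z−w)²/2 ) ] = G(x), where the inner supremum and the outer infimum are taken in the extended reals. -/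
open MeasureTheory Real

private lemma logcosh_le_abs (t : ℝ) : Real.log (Real.cosh t) ≤ |t| := by
  rw [Real.log_le_iff_le_exp (Real.cosh_pos t), Real.cosh_eq]
  have h1 : Real.exp t ≤ Real.exp |t| := Real.exp_le_exp.2 (le_abs_self t)
  have h2 : Real.exp (-t) ≤ Real.exp |t| := Real.exp_le_exp.2 (neg_le_abs t)
  linarith

private lemma logcosh_nonneg (t : ℝ) : 0 ≤ Real.log (Real.cosh t) :=
  Real.log_nonneg (Real.one_le_cosh t)

private lemma my_tanh_mono {a b : ℝ} (h : a ≤ b) : Real.tanh a ≤ Real.tanh b := by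
  rw [Real.tanh_eq_sinh_div_cosh, Real.tanh_eq_sinh_div_cosh,
    div_le_div_iff₀ (Real.cosh_pos a) (Real.cosh_pos b)]
  have h0 : Real.sinh (a - b) ≤ 0 := by
    rw [← Real.sinh_zero]
    exact Real.sinh_le_sinh.2 (by linarith)
  rw [Real.sinh_sub] at h0
  linarith

private lemma abs_tanh_le_one (t : ℝ) : |Real.tanh t| ≤ 1 := by
  rw [Real.tanh_eq_sinh_div_cosh, abs_div, abs_of_pos (Real.cosh_pos t),
    div_le_one (Real.cosh_pos t)]
  have h1 := Real.sinh_lt_cosh t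
  have h2 := Real.sinh_lt_cosh (-t)
  rw [Real.sinh_neg, Real.cosh_neg] at h2
  exact abs_le.2 ⟨by linarith, h1.le⟩

private lemma hasDerivAt_logcosh (t : ℝ) :
    HasDerivAt (fun s => Real.log (Real.cosh s)) (Real.tanh t) t := by
  have h := (Real.hasDerivAt_cosh t).log (Real.cosh_pos t).ne'
  simpa [Real.tanh_eq_sinh_div_cosh] using h

private lemma continuous_logcosh : Continuous (fun s : ℝ => Real.log (Real.cosh s)) :=
  Real.continuous_cosh.log (fun x => (Real.cosh_pos x).ne')

/-- Tangent-line (subgradient) inequality for the convex function `log ∘ cosh`. -/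
private lemma logcosh_tangent (a b : ℝ) :
    Real.tanh a * (b - a) ≤ Real.log (Real.cosh b) - Real.log (Real.cosh a) := by
  rcases lt_trichotomy a b with h | h | h
  · obtain ⟨c, hc, hcd⟩ := exists_hasDerivAt_eq_slope (fun s => Real.log (Real.cosh s))
      Real.tanh h continuous_logcosh.continuousOn (fun t _ => hasDerivAt_logcosh t)
    have hca : Real.tanh a ≤ Real.tanh c := my_tanh_mono hc.1.le
    have hba : 0 < b - a := by linarith
    have : Real.log (Real.cosh b) - Real.log (Real.cosh a) = Real.tanh c * (b - a) := by
      field_simp at hcd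
      linarith [hcd]
    rw [this]
    exact mul_le_mul_of_nonneg_right hca hba.le
  · simp [h]
  · obtain ⟨c, hc, hcd⟩ := exists_hasDerivAt_eq_slope (fun s => Real.log (Real.cosh s))
      Real.tanh h continuous_logcosh.continuousOn (fun t _ => hasDerivAt_logcosh t)
    have hca : Real.tanh c ≤ Real.tanh a := my_tanh_mono hc.2.le
    have hba : 0 < a - b := by linarith
    have heq : Real.log (Real.cosh a) - Real.log (Real.cosh b) = Real.tanh c * (a - b) := by
      field_simp at hcd
      linarith [hcd]
    nlinarith [mul_le_mul_of_nonneg_right hca hba.le]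

/-- For `β > 0` and a Borel probability measure `ν` on `ℝ` with finite
first moment, setting `L z = ∫ log cosh (β (z + h)) dν(h)` and `G x = β x²/2 − L x`,
the infimal-convolution identity
`inf_z [ β(x−z)²/2 + sup_w ( G w − β(z−w)²/2 ) ] = G x` holds for every `x ∈ ℝ`, with
the inner supremum and outer infimum taken in the extended reals `EReal`. -/
theorem stmt15 (β : ℝ) (hβ : 0 < β) (ν : Measure ℝ) [IsProbabilityMeasure ν]
    (hmom : Integrable (fun h : ℝ => |h|) ν)
    (L G : ℝ → ℝ)
    (hL : L = fun z : ℝ => ∫ h, Real.log (Real.cosh (β * (z + h))) ∂ν)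
    (hG : G = fun x : ℝ => β * x ^ 2 / 2 - L x) :
    ∀ x : ℝ,
      (⨅ z : ℝ, (((β * (x - z) ^ 2 / 2 : ℝ) : EReal) +
        ⨆ w : ℝ, ((G w - β * (z - w) ^ 2 / 2 : ℝ) : EReal))) = ((G x : ℝ) : EReal) := by
  -- integrability of the integrands
  have hintL : ∀ z : ℝ, Integrable (fun h => Real.log (Real.cosh (β * (z + h)))) ν := by
    intro z
    have hmeas : AEStronglyMeasurable (fun h => Real.log (Real.cosh (β * (z + h)))) ν :=
      (continuous_logcosh.comp (by continuity)).aestronglyMeasurable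
    refine Integrable.mono ((integrable_const (β * |z|)).add (hmom.const_mul β)) hmeas ?_
    filter_upwards with h
    have h1 : Real.log (Real.cosh (β * (z + h))) ≤ |β * (z + h)| := logcosh_le_abs _
    have h2 : |β * (z + h)| ≤ β * |z| + β * |h| := by
      rw [abs_mul, abs_of_pos hβ]
      calc β * |z + h| ≤ β * (|z| + |h|) :=
            mul_le_mul_of_nonneg_left (abs_add_le z h) hβ.le
        _ = β * |z| + β * |h| := by ring
    have h3 : 0 ≤ Real.log (Real.cosh (β * (z + h))) := logcosh_nonneg _
    have h4 : 0 ≤ β * |z| + β * |h| := by positivity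
    simp only [Pi.add_apply, Real.norm_eq_abs, abs_of_nonneg h3, abs_of_nonneg h4]
    linarith
  have hintT : ∀ y : ℝ, Integrable (fun h => Real.tanh (β * (y + h))) ν := by
    intro y
    have hmeas : AEStronglyMeasurable (fun h => Real.tanh (β * (y + h))) ν := by
      have hc : Continuous fun s : ℝ => Real.tanh s := by
        simp only [Real.tanh_eq_sinh_div_cosh]
        exact Real.continuous_sinh.div Real.continuous_cosh (fun s => (Real.cosh_pos s).ne')
      exact (hc.comp (by continuity)).aestronglyMeasurable
    refine Integrable.mono (integrable_const (1 : ℝ)) hmeas ?_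
    · filter_upwards with h
      simpa using abs_tanh_le_one (β * (y + h))
  intro x
  -- the subgradient inequality for L
  set z₀ : ℝ := ∫ h, Real.tanh (β * (x + h)) ∂ν with hz₀
  have key : ∀ w : ℝ, β * z₀ * (w - x) ≤ L w - L x := by
    intro w
    rw [hL]
    rw [← integral_sub (hintL w) (hintL x)]
    have : β * z₀ * (w - x) = ∫ h, Real.tanh (β * (x + h)) * (β * (w - x)) ∂ν := by
      rw [integral_mul_const, hz₀]; ring
    rw [this]
    refine integral_mono ((hintT x).mul_const _) ((hintL w).sub (hintL x)) ?_
    intro h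
    have := logcosh_tangent (β * (x + h)) (β * (w + h))
    have harg : β * (w + h) - β * (x + h) = β * (w - x) := by ring
    rw [harg] at this
    exact this
  -- real-valued inequality: for all w, G w - β(z₀-w)²/2 ≤ G x - β(x-z₀)²/2
  have keyG : ∀ w : ℝ, G w - β * (z₀ - w) ^ 2 / 2 ≤ G x - β * (x - z₀) ^ 2 / 2 := by
    intro w
    have hexp : G w - β * (z₀ - w) ^ 2 / 2 - (G x - β * (x - z₀) ^ 2 / 2)
        = β * z₀ * (w - x) - (L w - L x) := by
      rw [hG]; ring
    have := key w
    linarith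
  refine le_antisymm ?_ ?_
  · -- inf ≤ G x : take z = z₀
    refine iInf_le_of_le z₀ ?_
    have hsup : (⨆ w : ℝ, ((G w - β * (z₀ - w) ^ 2 / 2 : ℝ) : EReal))
        ≤ ((G x - β * (x - z₀) ^ 2 / 2 : ℝ) : EReal) :=
      iSup_le fun w => EReal.coe_le_coe_iff.2 (keyG w)
    calc ((β * (x - z₀) ^ 2 / 2 : ℝ) : EReal) + ⨆ w : ℝ, ((G w - β * (z₀ - w) ^ 2 / 2 : ℝ) : EReal)
        ≤ ((β * (x - z₀) ^ 2 / 2 : ℝ) : EReal) + ((G x - β * (x - z₀) ^ 2 / 2 : ℝ) : EReal) :=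
          add_le_add_right hsup _
      _ = ((G x : ℝ) : EReal) := by
          rw [← EReal.coe_add]; norm_cast; ring
  · -- G x ≤ inf : for each z, take w = x in the sup
    refine le_iInf fun z => ?_
    have hsup : ((G x - β * (x - z) ^ 2 / 2 : ℝ) : EReal)
        ≤ ⨆ w : ℝ, ((G w - β * (z - w) ^ 2 / 2 : ℝ) : EReal) := by
      refine le_iSup_of_le x ?_
      apply EReal.coe_le_coe_iff.2
      have : (z - x) ^ 2 = (x - z) ^ 2 := by ring
      rw [this]
    calc ((G x : ℝ) : EReal)
        = ((β * (x - z) ^ 2 / 2 : ℝ) : EReal) + ((G x - β * (x - z) ^ 2 / 2 : ℝ) : EReal) := by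
          rw [← EReal.coe_add]; norm_cast; ring
      _ ≤ ((β * (x - z) ^ 2 / 2 : ℝ) : EReal) +
          ⨆ w : ℝ, ((G w - β * (z - w) ^ 2 / 2 : ℝ) : EReal) := add_le_add_right hsup _
end
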